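/- Let q be an odd prime power with q ≡ 3 (mod 4) and q > 3, and set d = (q-3)/2. The number of triples (y₁, y₂, y₃) ∈ (F_q*)³ satisfying y₁ - y₂ + y₃ - 1 = 0 and y₁^d - y₂^d + y₃^d - 1 = 0 such that y₁ is a square and y₂, y₃ are nonsquares equals (q-1)/2. -/

import Mathlib

open Finset in
lemma card_nonsquares_aux (F : Type*) [Field F] [Fintype F] [DecidableEq F]
    (hchar : ringChar F ≠ 2) :
    {n : F | ¬ IsSquare n}.ncard = (Fintype.card F - 1) / 2 := by
  classical
  set N : Finset F := univ.filter (fun a : F => ¬ IsSquare a) with hN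
  have hsum : ∑ a : F, quadraticChar F a = 0 := quadraticChar_sum_zero hchar
  have hsplit : ∑ a : F, quadraticChar F a
      = ∑ a ∈ N, quadraticChar F a + ∑ a ∈ Nᶜ, quadraticChar F a :=
    (Finset.sum_add_sum_compl N _).symm
  have hNsum : ∑ a ∈ N, quadraticChar F a = -(N.card : ℤ) := by
    rw [Finset.sum_congr rfl (fun a ha => ?_), Finset.sum_const, nsmul_eq_mul, mul_neg_one]
    exact quadraticChar_neg_one_iff_not_isSquare.mpr (Finset.mem_filter.mp ha).2
  have h0mem : (0 : F) ∈ Nᶜ := by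
    simp [hN]
  have hNCsum : ∑ a ∈ Nᶜ, quadraticChar F a = (Nᶜ.card : ℤ) - 1 := by
    rw [← Finset.add_sum_erase _ _ h0mem, quadraticChar_zero, zero_add]
    rw [Finset.sum_congr rfl (fun a ha => ?_), Finset.sum_const, nsmul_eq_mul, mul_one,
      Finset.card_erase_of_mem h0mem]
    · have hcard : 1 ≤ Nᶜ.card := Finset.card_pos.mpr ⟨0, h0mem⟩
      push_cast [Nat.cast_sub hcard]
      ring
    · have ha0 : a ≠ 0 := Finset.ne_of_mem_erase ha
      have hsq : IsSquare a := by
        have := Finset.mem_compl.mp (Finset.mem_of_mem_erase ha)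
        simpa [hN] using this
      exact (quadraticChar_one_iff_isSquare ha0).mpr hsq
  have hcards : N.card + Nᶜ.card = Fintype.card F := by
    rw [Finset.card_add_card_compl]
  have hset : {n : F | ¬ IsSquare n} = (↑N : Set F) := by
    ext a; simp [hN]
  rw [hset, Set.ncard_coe_finset]
  have : (N.card : ℤ) + 1 = Nᶜ.card := by omega
  omega

theorem stmt_6 (F : Type*) [Field F] [Fintype F] [DecidableEq F]
    (hq3 : Fintype.card F % 4 = 3) (hq : 3 < Fintype.card F)
    (d : ℕ) (hd : d = (Fintype.card F - 3) / 2) :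
    {y : F × F × F |
        y.1 ≠ 0 ∧ y.2.1 ≠ 0 ∧ y.2.2 ≠ 0 ∧
        IsSquare y.1 ∧ ¬ IsSquare y.2.1 ∧ ¬ IsSquare y.2.2 ∧
        y.1 - y.2.1 + y.2.2 - 1 = 0 ∧
        y.1 ^ d - y.2.1 ^ d + y.2.2 ^ d - 1 = 0}.ncard = (Fintype.card F - 1) / 2 := by
  classical
  set q := Fintype.card F with hqdef
  have hchar : ringChar F ≠ 2 := by
    intro h
    have := (FiniteField.even_card_iff_char_two (F := F)).mp h
    omega
  have h2ne : (2 : F) ≠ 0 := Ring.two_ne_zero hchar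
  have hde : d + 1 = q / 2 := by omega
  have hqd2 : q / 2 * 2 = q - 1 := by omega
  -- power computation for squares
  have hpow_sq : ∀ x : F, x ≠ 0 → IsSquare x → x ^ d = x⁻¹ := by
    intro x hx hsq
    have h1 : x ^ (q / 2) = 1 := (FiniteField.isSquare_iff hchar hx).mp hsq
    have : x ^ d * x = 1 := by
      rw [← pow_succ, hde]; exact h1
    field_simp
    linear_combination this
  have hpow_ns : ∀ x : F, x ≠ 0 → ¬ IsSquare x → x ^ d = -x⁻¹ := by
    intro x hx hsq
    have hsq2 : x ^ (q / 2) * x ^ (q / 2) = 1 := by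
      rw [← pow_add]
      have : q / 2 + q / 2 = q - 1 := by omega
      rw [this]
      exact FiniteField.pow_card_sub_one_eq_one x hx
    rcases mul_self_eq_one_iff.mp hsq2 with h1 | h1
    · exact absurd ((FiniteField.isSquare_iff hchar hx).mpr h1) hsq
    · have : x ^ d * x = -1 := by
        rw [← pow_succ, hde]; exact h1
      field_simp
      linear_combination this
  have hneg1 : ¬ IsSquare (-1 : F) := by
    rw [FiniteField.isSquare_neg_one_iff]
    omega
  -- set equality
  have hset : {y : F × F × F |
        y.1 ≠ 0 ∧ y.2.1 ≠ 0 ∧ y.2.2 ≠ 0 ∧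
        IsSquare y.1 ∧ ¬ IsSquare y.2.1 ∧ ¬ IsSquare y.2.2 ∧
        y.1 - y.2.1 + y.2.2 - 1 = 0 ∧
        y.1 ^ d - y.2.1 ^ d + y.2.2 ^ d - 1 = 0}
      = (fun n : F => ((1 : F), n, n)) '' {n : F | ¬ IsSquare n} := by
    ext ⟨a, b, c⟩
    simp only [Set.mem_setOf_eq, Set.mem_image, Prod.mk.injEq]
    constructor
    · rintro ⟨ha0, hb0, hc0, hasq, hbsq, hcsq, h1, h2⟩
      rw [hpow_sq a ha0 hasq, hpow_ns b hb0 hbsq, hpow_ns c hc0 hcsq] at h2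
      have h2p : b * c + a * c - a * b - a * b * c = 0 := by
        field_simp at h2
        linear_combination h2
      have key : (a - 1) * (a * (c + 1) + c * (c - 1)) = 0 := by
        linear_combination (a + a * c - c) * h1 - h2p
      rcases mul_eq_zero.mp key with h | h
      · have ha1 : a = 1 := by linear_combination h
        have hcb : c = b := by linear_combination h1 - h
        exact ⟨b, hbsq, ha1.symm, rfl, hcb.symm⟩
      · exfalso
        have hc1 : c + 1 ≠ 0 := by
          intro h0
          have hcneg : c = -1 := by linear_combination h0
          apply h2ne
          rw [hcneg] at h
          linear_combination h
        have hA : a * (c + 1) ^ 2 = -1 * c * (b * (c + 1) ^ 2) := by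
          linear_combination (c + 1) ^ 2 * h - c * (c + 1) ^ 2 * h1
        have := congrArg (quadraticChar F) hA
        rw [map_mul, map_mul, map_mul, map_mul,
          quadraticChar_sq_one' hc1,
          (quadraticChar_one_iff_isSquare ha0).mpr hasq,
          quadraticChar_neg_one_iff_not_isSquare.mpr hneg1,
          quadraticChar_neg_one_iff_not_isSquare.mpr hbsq,
          quadraticChar_neg_one_iff_not_isSquare.mpr hcsq] at this
        norm_num at this
    · rintro ⟨n, hn, h1, h2, h3⟩
      subst h1; subst h2; subst h3
      have hn0 : (n : F) ≠ 0 := by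
        rintro rfl; exact hn ⟨0, by ring⟩
      refine ⟨one_ne_zero, hn0, hn0, IsSquare.one, hn, hn, by ring, by rw [one_pow]; ring⟩
  rw [hset, Set.ncard_image_of_injective _ (fun x y h => by simpa using h),
    card_nonsquares_aux F hchar]
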